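/- Let μ0 ∈ ℝ, σ0 > 0, ᾱ ∈ (0,1), σ_t = √(ᾱ σ0² + (1 − ᾱ)), and let f ∈ ℝ. Let X, N be independent real random variables with X ~ N(μ0, σ0²), N ~ N(0,1), Z = √ᾱ X + √(1−ᾱ) N, and define the linear decoder X̂_f = (σ0 f/σ_t) Z + (1 − √ᾱ σ0 f/σ_t) μ0. Then: (i) E[X̂_f] = μ0 and Var(X̂_f) = σ0² f²; and (ii) E[(X − X̂_f)²] = σ0² ( f − √ᾱ σ0/σ_t )² + σ0² − ᾱ σ0⁴/σ_t². (These are the exact distortion and marginal second-moment levels of the score-scaled PF-ODE decoder with product factor f.) -/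

import Mathlib

open MeasureTheory ProbabilityTheory Real
open scoped NNReal ENNReal

section AuxGaussianMoments

lemma aux_m1 {b : ℝ} (hb : 0 < b) : ∫ x : ℝ, x * Real.exp (-b * x ^ 2) = 0 := by
  have hderiv : ∀ x : ℝ, HasDerivAt (fun x : ℝ => -(2*b)⁻¹ * Real.exp (-b * x ^ 2))
      (x * Real.exp (-b * x ^ 2)) x := by
    intro x
    have h1 : HasDerivAt (fun x : ℝ => -b * x ^ 2) (-b * (2 * x ^ 1)) x :=
      (hasDerivAt_pow 2 x).const_mul (-b)
    have h2 := (h1.exp).const_mul (-(2*b)⁻¹)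
    refine h2.congr_deriv ?_
    field_simp
  exact integral_eq_zero_of_hasDerivAt_of_integrable hderiv
    (integrable_mul_exp_neg_mul_sq hb) ((integrable_exp_neg_mul_sq hb).const_mul _)

lemma int_sq_exp {b : ℝ} (hb : 0 < b) :
    Integrable (fun x : ℝ => x ^ 2 * Real.exp (-b * x ^ 2)) := by
  have h := integrable_rpow_mul_exp_neg_mul_sq hb (s := 2) (by norm_num)
  simpa [Real.rpow_two] using h

lemma aux_m2 {b : ℝ} (hb : 0 < b) :
    ∫ x : ℝ, x ^ 2 * Real.exp (-b * x ^ 2) = Real.sqrt (Real.pi / b) / (2 * b) := by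
  have hderiv : ∀ x : ℝ, HasDerivAt (fun x : ℝ => x * Real.exp (-b * x ^ 2))
      (Real.exp (-b * x ^ 2) - 2 * b * (x ^ 2 * Real.exp (-b * x ^ 2))) x := by
    intro x
    have h1 : HasDerivAt (fun x : ℝ => -b * x ^ 2) (-b * (2 * x ^ 1)) x :=
      (hasDerivAt_pow 2 x).const_mul (-b)
    have h2 := (hasDerivAt_id x).mul h1.exp
    simp only [id_eq, one_mul] at h2
    refine h2.congr_deriv ?_
    ring
  have h0 : ∫ x : ℝ, (Real.exp (-b * x ^ 2) - 2 * b * (x ^ 2 * Real.exp (-b * x ^ 2))) = 0 :=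
    integral_eq_zero_of_hasDerivAt_of_integrable hderiv
      ((integrable_exp_neg_mul_sq hb).sub ((int_sq_exp hb).const_mul _))
      (integrable_mul_exp_neg_mul_sq hb)
  rw [integral_sub (integrable_exp_neg_mul_sq hb) ((int_sq_exp hb).const_mul _),
    integral_const_mul, integral_gaussian] at h0
  have hb' : (2:ℝ) * b ≠ 0 := by positivity
  field_simp at h0 ⊢
  linarith

lemma std_repr (g : ℝ → ℝ) :
    ∫ x, g x ∂(gaussianReal 0 1) = ∫ x, gaussianPDFReal 0 1 x * g x := by
  rw [gaussianReal_of_var_ne_zero 0 one_ne_zero]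
  have : (gaussianPDF 0 1) = fun x => ((Real.toNNReal (gaussianPDFReal 0 1 x) : ℝ≥0) : ℝ≥0∞) := rfl
  rw [this, integral_withDensity_eq_integral_smul
    ((measurable_gaussianPDFReal 0 1).real_toNNReal) g]
  congr 1
  funext x
  simp [NNReal.smul_def, Real.coe_toNNReal', max_eq_left (gaussianPDFReal_nonneg 0 1 x)]

lemma std_int_iff (g : ℝ → ℝ) (hg : Measurable g) :
    Integrable g (gaussianReal 0 1) ↔ Integrable (fun x => gaussianPDFReal 0 1 x * g x) := by
  rw [gaussianReal_of_var_ne_zero 0 one_ne_zero]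
  have : (gaussianPDF 0 1) = fun x => ((Real.toNNReal (gaussianPDFReal 0 1 x) : ℝ≥0) : ℝ≥0∞) := rfl
  rw [this, integrable_withDensity_iff_integrable_smul
    ((measurable_gaussianPDFReal 0 1).real_toNNReal)]
  constructor <;> intro h <;> refine h.congr (Filter.Eventually.of_forall fun x => ?_) <;>
    simp [NNReal.smul_def, Real.coe_toNNReal', max_eq_left (gaussianPDFReal_nonneg 0 1 x)]

lemma pdf_eq (x : ℝ) : gaussianPDFReal 0 1 x
    = (Real.sqrt (2 * Real.pi))⁻¹ * Real.exp (-(2⁻¹ : ℝ) * x ^ 2) := by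
  simp only [gaussianPDFReal, NNReal.coe_one, mul_one, sub_zero]
  congr 1
  ring


lemma std_int1 : Integrable (fun x => x) (gaussianReal 0 1) := by
  rw [std_int_iff (fun x => x) measurable_id]
  have h : Integrable (fun x => (Real.sqrt (2*Real.pi))⁻¹ * (x * Real.exp (-(2⁻¹:ℝ) * x ^ 2))) :=
    (integrable_mul_exp_neg_mul_sq (by norm_num)).const_mul _
  exact h.congr (Filter.Eventually.of_forall fun x => by simp only []; rw [pdf_eq]; ring)

lemma std_int2 : Integrable (fun x : ℝ => x ^ 2) (gaussianReal 0 1) := by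
  rw [std_int_iff (fun x : ℝ => x ^ 2) (measurable_id.pow_const 2)]
  have h : Integrable (fun x : ℝ =>
      (Real.sqrt (2*Real.pi))⁻¹ * (x ^ 2 * Real.exp (-(2⁻¹:ℝ) * x ^ 2))) :=
    (int_sq_exp (by norm_num)).const_mul _
  exact h.congr (Filter.Eventually.of_forall fun x => by simp only []; rw [pdf_eq]; ring)

lemma std_m1 : ∫ x, x ∂(gaussianReal 0 1) = 0 := by
  rw [std_repr]
  have : ∫ x, gaussianPDFReal 0 1 x * x
      = ∫ x, (Real.sqrt (2 * Real.pi))⁻¹ * (x * Real.exp (-(2⁻¹:ℝ) * x ^ 2)) := by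
    congr 1; funext x; rw [pdf_eq]; ring
  rw [this, integral_const_mul, aux_m1 (by norm_num)]
  ring

lemma std_m2 : ∫ x, x ^ 2 ∂(gaussianReal 0 1) = 1 := by
  rw [std_repr]
  have : ∫ x, gaussianPDFReal 0 1 x * x ^ 2
      = ∫ x, (Real.sqrt (2 * Real.pi))⁻¹ * (x ^ 2 * Real.exp (-(2⁻¹:ℝ) * x ^ 2)) := by
    congr 1; funext x; rw [pdf_eq]; ring
  rw [this, integral_const_mul, aux_m2 (by norm_num)]
  rw [show Real.pi / (2:ℝ)⁻¹ = 2 * Real.pi by ring]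
  rw [inv_mul_eq_div, div_eq_one_iff_eq (by positivity)]
  rw [div_eq_iff (by norm_num)]
  ring


lemma gauss_map (μ : ℝ) (v : ℝ≥0) :
    gaussianReal μ v = (gaussianReal 0 1).map (fun x => Real.sqrt v * x + μ) := by
  have hm : Measurable (fun x : ℝ => Real.sqrt v * x) := measurable_id'.const_mul _
  have hcomp : (fun x : ℝ => Real.sqrt v * x + μ)
      = (fun x : ℝ => x + μ) ∘ (fun x : ℝ => Real.sqrt v * x) := rfl
  rw [hcomp, ← Measure.map_map (measurable_add_const μ) hm,
    gaussianReal_map_const_mul (μ := 0) (v := 1) (Real.sqrt v),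
    gaussianReal_map_add_const μ]
  congr 1
  · simp
  · ext
    push_cast
    rw [Real.sq_sqrt (by positivity)]
    simp

variable {μ : ℝ} {v : ℝ≥0}

lemma gen_int1 (μ : ℝ) (v : ℝ≥0) : Integrable (fun x => x) (gaussianReal μ v) := by
  rw [gauss_map μ v, integrable_map_measure measurable_id'.aestronglyMeasurable
    ((measurable_id'.const_mul _).add_const μ).aemeasurable]
  exact (std_int1.const_mul _).add (integrable_const μ)

lemma gen_int2 (μ : ℝ) (v : ℝ≥0) : Integrable (fun x : ℝ => x ^ 2) (gaussianReal μ v) := by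
  rw [gauss_map μ v, integrable_map_measure
    (measurable_id'.pow_const 2).aestronglyMeasurable
    ((measurable_id'.const_mul _).add_const μ).aemeasurable]
  have h : Integrable (fun x : ℝ => (Real.sqrt v)^2 * x ^ 2 + ((2 * Real.sqrt v * μ) * x + μ^2))
      (gaussianReal 0 1) :=
    (std_int2.const_mul _).add ((std_int1.const_mul _).add (integrable_const _))
  exact h.congr (Filter.Eventually.of_forall fun x => by simp only [Function.comp]; ring)

lemma gen_m1 (μ : ℝ) (v : ℝ≥0) : ∫ x, x ∂(gaussianReal μ v) = μ := by
  rw [gauss_map μ v, integral_map ((measurable_id'.const_mul _).add_const μ).aemeasurable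
    measurable_id'.aestronglyMeasurable]
  rw [integral_add (std_int1.const_mul _) (integrable_const μ), integral_const_mul, std_m1,
    integral_const]
  simp

lemma gen_m2 (μ : ℝ) (v : ℝ≥0) : ∫ x, x ^ 2 ∂(gaussianReal μ v) = v + μ ^ 2 := by
  rw [gauss_map μ v, integral_map ((measurable_id'.const_mul _).add_const μ).aemeasurable
    (measurable_id'.pow_const 2).aestronglyMeasurable]
  have h : ∫ x, (Real.sqrt v * x + μ) ^ 2 ∂(gaussianReal 0 1)
      = ∫ x, ((Real.sqrt v)^2 * x ^ 2 + ((2 * Real.sqrt v * μ) * x + μ^2))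
        ∂(gaussianReal 0 1) := by
    congr 1; funext x; ring
  have i1 : Integrable (fun x : ℝ => (Real.sqrt v)^2 * x ^ 2) (gaussianReal 0 1) :=
    std_int2.const_mul _
  have i2 : Integrable (fun x : ℝ => (2 * Real.sqrt v * μ) * x) (gaussianReal 0 1) :=
    std_int1.const_mul _
  have i23 : Integrable (fun x : ℝ => (2 * Real.sqrt v * μ) * x + μ^2) (gaussianReal 0 1) :=
    i2.add (integrable_const _)
  rw [h, integral_add i1 i23, integral_add i2 (integrable_const _),
    integral_const_mul, integral_const_mul, std_m1, std_m2, integral_const]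
  simp [Real.sq_sqrt (v.coe_nonneg)]

end AuxGaussianMoments

/-- Exact mean, variance and mean-square error of the linear decoder
`X̂_f = (σ0 f/σ_t) Z + (1 − √ᾱ σ0 f/σ_t) μ0` from the AWGN observation
`Z = √ᾱ X + √(1−ᾱ) N` of a scalar Gaussian source `X ~ N(μ0, σ0²)`. -/


theorem stmt_8 {Ω : Type*} [MeasurableSpace Ω] (P : Measure Ω) [IsProbabilityMeasure P]
    (μ0 σ0 ab f : ℝ) (hσ0 : 0 < σ0) (hab : ab ∈ Set.Ioo (0:ℝ) 1)
    (σt : ℝ) (hσt : σt = Real.sqrt (ab * σ0 ^ 2 + (1 - ab)))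
    (X N : Ω → ℝ) (hX : Measurable X) (hN : Measurable N)
    (hindep : IndepFun X N P)
    (hXlaw : P.map X = gaussianReal μ0 (Real.toNNReal (σ0 ^ 2)))
    (hNlaw : P.map N = gaussianReal 0 1)
    (Z : Ω → ℝ)
    (hZ : Z = fun ω => Real.sqrt ab * X ω + Real.sqrt (1 - ab) * N ω)
    (Xhat : Ω → ℝ)
    (hXhat : Xhat = fun ω => (σ0 * f / σt) * Z ω + (1 - Real.sqrt ab * σ0 * f / σt) * μ0) :
    (∫ ω, Xhat ω ∂P) = μ0 ∧
    variance Xhat P = σ0 ^ 2 * f ^ 2 ∧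
    (∫ ω, (X ω - Xhat ω) ^ 2 ∂P) =
      σ0 ^ 2 * (f - Real.sqrt ab * σ0 / σt) ^ 2 + σ0 ^ 2 - ab * σ0 ^ 4 / σt ^ 2 := by
  obtain ⟨hab0, hab1⟩ := hab
  -- basic scalars
  have hs2 : Real.sqrt ab ^ 2 = ab := Real.sq_sqrt hab0.le
  have ht2 : Real.sqrt (1 - ab) ^ 2 = 1 - ab := Real.sq_sqrt (by linarith)
  have hin : (0:ℝ) < ab * σ0 ^ 2 + (1 - ab) := by nlinarith [sq_nonneg σ0]
  have hσtpos : 0 < σt := hσt ▸ Real.sqrt_pos.2 hin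
  have hσtne : σt ≠ 0 := ne_of_gt hσtpos
  have hσt2 : σt ^ 2 = ab * σ0 ^ 2 + (1 - ab) := hσt ▸ Real.sq_sqrt hin.le
  set s : ℝ := Real.sqrt ab with hsdef
  set t : ℝ := Real.sqrt (1 - ab) with htdef
  set c : ℝ := σ0 * f / σt with hcdef
  -- moments of X and N
  have iX1 : Integrable X P := by
    have h := (integrable_map_measure measurable_id'.aestronglyMeasurable hX.aemeasurable).1
      (by rw [hXlaw]; exact gen_int1 _ _)
    exact h
  have iN1 : Integrable N P := by
    have h := (integrable_map_measure measurable_id'.aestronglyMeasurable hN.aemeasurable).1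
      (by rw [hNlaw]; exact gen_int1 _ _)
    exact h
  have iX2 : Integrable (fun ω => X ω ^ 2) P := by
    have h := (integrable_map_measure (measurable_id'.pow_const 2).aestronglyMeasurable
      hX.aemeasurable).1 (by rw [hXlaw]; exact gen_int2 _ _)
    exact h
  have iN2 : Integrable (fun ω => N ω ^ 2) P := by
    have h := (integrable_map_measure (measurable_id'.pow_const 2).aestronglyMeasurable
      hN.aemeasurable).1 (by rw [hNlaw]; exact gen_int2 _ _)
    exact h
  have iXN : Integrable (fun ω => X ω * N ω) P := by
    have h := hindep.integrable_mul iX1 iN1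
    exact h
  have EX : ∫ ω, X ω ∂P = μ0 := by
    rw [show ∫ ω, X ω ∂P = ∫ x, x ∂(P.map X) from
      (integral_map hX.aemeasurable measurable_id'.aestronglyMeasurable).symm, hXlaw, gen_m1]
  have EN : ∫ ω, N ω ∂P = 0 := by
    rw [show ∫ ω, N ω ∂P = ∫ x, x ∂(P.map N) from
      (integral_map hN.aemeasurable measurable_id'.aestronglyMeasurable).symm, hNlaw, gen_m1]
  have EX2 : ∫ ω, X ω ^ 2 ∂P = σ0 ^ 2 + μ0 ^ 2 := by
    rw [show ∫ ω, X ω ^ 2 ∂P = ∫ x, x ^ 2 ∂(P.map X) from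
      (integral_map hX.aemeasurable (measurable_id'.pow_const 2).aestronglyMeasurable).symm,
      hXlaw, gen_m2, Real.coe_toNNReal _ (sq_nonneg σ0)]
  have EN2 : ∫ ω, N ω ^ 2 ∂P = 1 := by
    rw [show ∫ ω, N ω ^ 2 ∂P = ∫ x, x ^ 2 ∂(P.map N) from
      (integral_map hN.aemeasurable (measurable_id'.pow_const 2).aestronglyMeasurable).symm,
      hNlaw, gen_m2]
    norm_num
  have EXN : ∫ ω, X ω * N ω ∂P = 0 := by
    have h := hindep.integral_mul_eq_mul_integral iX1.1 iN1.1
    have hfun : (fun ω => X ω * N ω) = X * N := rfl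
    rw [hfun, h, EX, EN, mul_zero]
  -- linear and quadratic expansion lemmas
  have lin : ∀ p q r : ℝ, ∫ ω, (p * X ω + q * N ω + r) ∂P = p * μ0 + r := by
    intro p q r
    have i1 : Integrable (fun ω => p * X ω) P := iX1.const_mul _
    have i2 : Integrable (fun ω => q * N ω) P := iN1.const_mul _
    have i2' : Integrable (fun ω => q * N ω + r) P := i2.add (integrable_const r)
    have hre : ∫ ω, (p * X ω + q * N ω + r) ∂P = ∫ ω, (p * X ω + (q * N ω + r)) ∂P := by
      congr 1; funext ω; ring
    rw [hre, integral_add i1 i2', integral_add i2 (integrable_const r),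
      integral_const_mul, integral_const_mul, EX, EN, integral_const]
    simp
  have quad : ∀ p q r : ℝ, ∫ ω, (p * X ω + q * N ω + r) ^ 2 ∂P
      = p ^ 2 * (σ0 ^ 2 + μ0 ^ 2) + q ^ 2 + 2 * p * r * μ0 + r ^ 2 := by
    intro p q r
    have i1 : Integrable (fun ω => p ^ 2 * X ω ^ 2) P := iX2.const_mul _
    have i2 : Integrable (fun ω => q ^ 2 * N ω ^ 2) P := iN2.const_mul _
    have i3 : Integrable (fun ω => (2 * p * q) * (X ω * N ω)) P := iXN.const_mul _
    have i4 : Integrable (fun ω => (2 * p * r) * X ω) P := iX1.const_mul _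
    have i5 : Integrable (fun ω => (2 * q * r) * N ω) P := iN1.const_mul _
    have i6 : Integrable (fun _ : Ω => r ^ 2) P := integrable_const _
    have hexp : ∫ ω, (p * X ω + q * N ω + r) ^ 2 ∂P
        = ∫ ω, (p ^ 2 * X ω ^ 2 + (q ^ 2 * N ω ^ 2 + ((2 * p * q) * (X ω * N ω)
          + ((2 * p * r) * X ω + ((2 * q * r) * N ω + r ^ 2))))) ∂P := by
      congr 1; funext ω; ring
    have j5 : Integrable (fun ω => (2 * q * r) * N ω + r ^ 2) P := i5.add i6
    have j4 : Integrable (fun ω => (2 * p * r) * X ω + ((2 * q * r) * N ω + r ^ 2)) P :=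
      i4.add j5
    have j3 : Integrable (fun ω => (2 * p * q) * (X ω * N ω)
        + ((2 * p * r) * X ω + ((2 * q * r) * N ω + r ^ 2))) P := i3.add j4
    have j2 : Integrable (fun ω => q ^ 2 * N ω ^ 2 + ((2 * p * q) * (X ω * N ω)
        + ((2 * p * r) * X ω + ((2 * q * r) * N ω + r ^ 2)))) P := i2.add j3
    rw [hexp, integral_add i1 j2, integral_add i2 j3, integral_add i3 j4,
      integral_add i4 j5, integral_add i5 i6,
      integral_const_mul, integral_const_mul, integral_const_mul,
      integral_const_mul, integral_const_mul, EX, EN, EX2, EN2, EXN, integral_const]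
    simp
    ring
  -- rewrite Xhat
  have hXhat2 : Xhat = fun ω => (c * s) * X ω + (c * t) * N ω + (μ0 - (c * s) * μ0) := by
    rw [hXhat, hZ]
    funext ω
    simp only [hcdef, hsdef, htdef]
    ring
  have G1 : (∫ ω, Xhat ω ∂P) = μ0 := by
    rw [hXhat2, lin]
    ring
  -- MemLp for variance
  have memX : MemLp X 2 P := by
    have h := (memLp_map_measure_iff measurable_id'.aestronglyMeasurable hX.aemeasurable).1
      (by rw [hXlaw]
          exact (memLp_two_iff_integrable_sq measurable_id'.aestronglyMeasurable).2
            (gen_int2 _ _))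
    exact h
  have memN : MemLp N 2 P := by
    have h := (memLp_map_measure_iff measurable_id'.aestronglyMeasurable hN.aemeasurable).1
      (by rw [hNlaw]
          exact (memLp_two_iff_integrable_sq measurable_id'.aestronglyMeasurable).2
            (gen_int2 _ _))
    exact h
  have memXhat : MemLp Xhat 2 P := by
    rw [hXhat2]
    exact ((memX.const_mul _).add (memN.const_mul _)).add (memLp_const _)
  have hc' : c * σt = σ0 * f := by rw [hcdef]; field_simp
  have hcc : c ^ 2 * σt ^ 2 = σ0 ^ 2 * f ^ 2 := by
    rw [← mul_pow, hc']; ring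
  have hkey2 : s ^ 2 * σ0 ^ 2 + t ^ 2 = σt ^ 2 := by
    rw [hs2, ht2, hσt2]
  have G2 : variance Xhat P = σ0 ^ 2 * f ^ 2 := by
    rw [variance_eq_sub memXhat]
    have hsq : P[Xhat ^ 2]
        = ∫ ω, ((c * s) * X ω + (c * t) * N ω + (μ0 - (c * s) * μ0)) ^ 2 ∂P := by
      rw [hXhat2]; rfl
    rw [hsq, quad, G1]
    linear_combination c ^ 2 * hkey2 + hcc
  refine ⟨G1, G2, ?_⟩
  have e3 : ∀ ω, (X ω - Xhat ω) ^ 2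
      = ((1 - c * s) * X ω + (-(c * t)) * N ω + ((c * s) * μ0 - μ0)) ^ 2 := by
    intro ω; rw [hXhat2]; ring
  simp only [e3]
  rw [quad]
  have hfs : f - s * σ0 / σt = (f * σt - s * σ0) / σt := by field_simp
  have hRHS : σ0 ^ 2 * (f - s * σ0 / σt) ^ 2 + σ0 ^ 2 - ab * σ0 ^ 4 / σt ^ 2
      = (σ0 ^ 2 * (f * σt - s * σ0) ^ 2 + σ0 ^ 2 * σt ^ 2 - ab * σ0 ^ 4) / σt ^ 2 := by
    rw [hfs]
    field_simp
  rw [hRHS, eq_div_iff (pow_ne_zero 2 hσtne)]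
  linear_combination (-2 * s * σ0 ^ 2 * σt) * hc' + (s ^ 2 * σ0 ^ 2 + t ^ 2) * hcc
    + (σ0 ^ 4 * f ^ 2 - σ0 ^ 4) * hs2 + (σ0 ^ 2 * f ^ 2) * ht2 - (σ0 ^ 2 * f ^ 2) * hσt2
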